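/- arXiv:2007.10914 — 5 statements merged into one kernel-verified Lean document; each statement's English description precedes it below -/
import Mathlib

section
/- Let N, n, k be positive integers, X : Fin n → M_N(ℂ) an n-tuple of matrices, ℓ : Fin k → Fin n a word, i ∈ Fin n, and a, b, c, d ∈ Fin N. Define g : ℂ → ℂ by g(t) = (∏_{r=0}^{k−1} (X_{ℓ(r)} + t·δ_{ℓ(r),i}·E(b,c)))_{a d}, the product taken in increasing order of r. Then g has derivative at t = 0 equal to Σ_{r : ℓ(r)=i} (∏_{s<r} X_{ℓ(s)})_{a b} · (∏_{s>r} X_{ℓ(s)})_{c d}. (This realizes the abstract noncommutative derivative ∂^{x_i} on matrices: [(∂^{X_i}Q)(X)]_{ab;cd} = ∂[Q(X)]_{ad}/∂(X_i)_{bc}.) -/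
open Matrix

private lemma range_filter_lt' (m : ℕ) :
    ∀ k, (List.range k).filter (fun x => decide (x < m)) = (List.range k).take m := by
  intro k
  induction k with
  | zero => simp
  | succ k ih =>
    rw [List.range_succ, List.filter_append, List.take_append, ih]
    congr 1
    by_cases h : k < m
    · rw [List.filter_cons]
      simp only [List.length_range]
      simp [h, List.take_of_length_le, show 1 ≤ m - k by omega]
    · simp only [List.length_range]
      simp [h, show m - k = 0 by omega]

private lemma range_filter_gt' (m : ℕ) :
    ∀ k, (List.range k).filter (fun x => decide (m < x)) = (List.range k).drop (m+1) := by
  intro k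
  induction k with
  | zero => simp
  | succ k ih =>
    rw [List.range_succ, List.filter_append, List.drop_append, ih]
    congr 1
    by_cases h : m < k
    · simp only [List.length_range]
      simp [h, show m + 1 - k = 0 by omega]
    · simp only [List.length_range]
      simp [h, List.drop_of_length_le, show 1 ≤ m + 1 - k by omega]

private lemma map_coe_finRange' (k : ℕ) : (List.finRange k).map Fin.val = List.range k :=
  List.ext_getElem (by simp) (by simp)

private lemma finRange_filter_lt' {k : ℕ} (r : Fin k) :
    (List.finRange k).filter (fun s => decide (s < r)) = (List.finRange k).take r := by
  apply List.map_injective_iff.mpr Fin.val_injective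
  rw [List.map_take, map_coe_finRange', ← range_filter_lt']
  rw [← map_coe_finRange' k, List.filter_map]
  congr 1

private lemma finRange_filter_gt' {k : ℕ} (r : Fin k) :
    (List.finRange k).filter (fun s => decide (r < s)) = (List.finRange k).drop (r+1) := by
  apply List.map_injective_iff.mpr Fin.val_injective
  rw [List.map_drop, map_coe_finRange', ← range_filter_gt']
  rw [← map_coe_finRange' k, List.filter_map]
  congr 1

private noncomputable def Dm {k N : ℕ} (M B : Fin k → Matrix (Fin N) (Fin N) ℂ) :
    List (Fin k) → Matrix (Fin N) (Fin N) ℂ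
  | [] => 0
  | r :: L => B r * ((L.map M).prod) + M r * Dm M B L

private lemma hasDerivAt_entry {k N : ℕ} (M B : Fin k → Matrix (Fin N) (Fin N) ℂ) :
    ∀ (L : List (Fin k)) (a d : Fin N),
      HasDerivAt (fun t : ℂ => ((L.map (fun r => M r + t • B r)).prod) a d)
        (Dm M B L a d) 0 := by
  intro L
  induction L with
  | nil =>
      intro a d
      simpa [Dm] using hasDerivAt_const (0:ℂ) ((1 : Matrix (Fin N) (Fin N) ℂ) a d)
  | cons r L ih =>
      intro a d
      have key : HasDerivAt (fun t : ℂ => ∑ j, ((M r + t • B r) a j) *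
          ((L.map (fun s => M s + t • B s)).prod j d))
          (∑ j, (B r a j * ((L.map M).prod j d) + M r a j * Dm M B L j d)) 0 := by
        apply HasDerivAt.fun_sum
        intro j _
        have h1 : HasDerivAt (fun t : ℂ => (M r + t • B r) a j) (B r a j) 0 := by
          simpa [Matrix.add_apply, Matrix.smul_apply, smul_eq_mul] using
            ((hasDerivAt_id (0:ℂ)).mul_const (B r a j)).const_add (M r a j)
        have h2 := ih j d
        have h3 := h1.fun_mul h2
        simpa using h3
      have heq : (fun t : ℂ => (((r :: L).map (fun s => M s + t • B s)).prod) a d)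
          = fun t : ℂ => ∑ j, ((M r + t • B r) a j) *
            ((L.map (fun s => M s + t • B s)).prod j d) := by
        funext t
        simp [Matrix.mul_apply]
      rw [heq]
      have : (Dm M B (r :: L)) a d
          = ∑ j, (B r a j * ((L.map M).prod j d) + M r a j * Dm M B L j d) := by
        simp [Dm, Matrix.add_apply, Matrix.mul_apply, Finset.sum_add_distrib]
      rw [this]
      exact key

private lemma Dm_eq {k N : ℕ} (M B : Fin k → Matrix (Fin N) (Fin N) ℂ) :
    ∀ L : List (Fin k),
      Dm M B L = ∑ j : Fin L.length,
        ((L.take j).map M).prod * B (L.get j) * ((L.drop (j+1)).map M).prod := by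
  intro L
  induction L with
  | nil => simp [Dm]
  | cons r L ih =>
      rw [Dm, ih]; erw [Fin.sum_univ_succ]
      simp [Finset.mul_sum, mul_assoc, List.take_succ_cons]

private lemma entry_mul_stdBasis {N : ℕ} (P1 P2 : Matrix (Fin N) (Fin N) ℂ) (a b c d : Fin N) :
    (P1 * Matrix.single b c (1:ℂ) * P2) a d = P1 a b * P2 c d := by
  simp [Matrix.mul_apply, Matrix.single, ite_and, Finset.sum_ite_eq, Finset.mul_sum]

/-- The abstract noncommutative derivative `∂^{x_i}` realized on matrices:
the derivative at `t = 0` of the `(a,d)` entry of the monomial where `X_{ℓ(r)}` is perturbed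
to `X_{ℓ(r)} + t·δ_{ℓ(r),i}·E(b,c)` equals
`Σ_{r : ℓ(r)=i} (∏_{s<r} X_{ℓ(s)})_{ab} · (∏_{s>r} X_{ℓ(s)})_{cd}`. -/
theorem stmt0 (N n k : ℕ) (hN : 0 < N) (hn : 0 < n) (hk : 0 < k)
    (X : Fin n → Matrix (Fin N) (Fin N) ℂ) (ℓ : Fin k → Fin n) (i : Fin n)
    (a b c d : Fin N) :
    HasDerivAt
      (fun t : ℂ =>
        (((List.finRange k).map (fun r =>
            X (ℓ r) + (t * (if ℓ r = i then (1 : ℂ) else 0)) •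
              Matrix.single b c (1 : ℂ))).prod) a d)
      (∑ r ∈ Finset.univ.filter (fun r : Fin k => ℓ r = i),
        ((((List.finRange k).filter (fun s => s < r)).map (fun s => X (ℓ s))).prod) a b *
          ((((List.finRange k).filter (fun s => r < s)).map (fun s => X (ℓ s))).prod) c d)
      0 := by
  set M : Fin k → Matrix (Fin N) (Fin N) ℂ := fun r => X (ℓ r) with hM
  set B : Fin k → Matrix (Fin N) (Fin N) ℂ :=
    fun r => (if ℓ r = i then (1:ℂ) else 0) • Matrix.single b c (1:ℂ) with hB
  have h := hasDerivAt_entry M B (List.finRange k) a d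
  have hfun : (fun t : ℂ =>
        (((List.finRange k).map (fun r =>
            X (ℓ r) + (t * (if ℓ r = i then (1 : ℂ) else 0)) •
              Matrix.single b c (1 : ℂ))).prod) a d)
      = fun t : ℂ => (((List.finRange k).map (fun r => M r + t • B r)).prod) a d := by
    funext t
    simp only [hM, hB, mul_smul]
  rw [hfun]
  convert h using 1
  rw [Dm_eq]
  rw [Matrix.sum_apply]
  rw [Finset.sum_filter]
  refine Fintype.sum_equiv (finCongr (List.length_finRange (n := k)).symm) _ _ ?_
  intro j
  have hget : (List.finRange k).get (finCongr (List.length_finRange (n := k)).symm j) = j := by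
    simp
  rw [hget]
  have hval : ((finCongr (List.length_finRange (n := k)).symm j) : ℕ) = (j : ℕ) := rfl
  rw [hval]
  simp only [hB]
  rw [mul_smul_comm, smul_mul_assoc, Matrix.smul_apply, smul_eq_mul]
  rw [entry_mul_stdBasis]
  rw [← finRange_filter_lt', ← finRange_filter_gt']
  by_cases hji : ℓ j = i <;> simp [hji, hM]
end

section
/- Let N, n, k be positive integers, X : Fin n → M_N(ℂ) an n-tuple of matrices, ℓ : Fin k → Fin n a word, i ∈ Fin n, and b, c ∈ Fin N. Define f : ℂ → ℂ by f(t) = Tr(∏_{r=0}^{k−1} (X_{ℓ(r)} + t·δ_{ℓ(r),i}·E(b,c))). Then f has derivative at t = 0 equal to Σ_{r : ℓ(r)=i} (X_{ℓ(r+1)} ⋯ X_{ℓ(k−1)} · X_{ℓ(0)} ⋯ X_{ℓ(r−1)})_{c b}. In other words, the derivative of the trace of a matrix monomial with respect to the (b,c) entry of X_i equals the (c,b) entry of Voiculescu's cyclic derivative: ∂ Tr Q(X)/∂(X_i)_{bc} = [(𝒟^{x_i}Q)(X)]_{cb}, where 𝒟^{x_i}Q := Σ_{r : ℓ(r)=i}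 X_{ℓ(r+1)} ⋯ X_{ℓ(k−1)} X_{ℓ(0)} ⋯ X_{ℓ(r−1)}. -/
open Matrix

attribute [local instance] Matrix.linftyOpNormedRing Matrix.linftyOpNormedAlgebra

/-- Derivative of a list product of differentiable functions into a normed ring. -/
theorem aux_list_deriv {R : Type*} [NormedRing R] [NormedAlgebra ℂ R] {ι : Type*}
    (l : List ι) (f : ι → ℂ → R) (f' : ι → R) (t : ℂ)
    (h : ∀ j, HasDerivAt (f j) (f' j) t) :
    HasDerivAt (fun s => (l.map (f · s)).prod)
      (∑ p : Fin l.length,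
        ((l.take p).map (f · t)).prod * f' (l.get p) * ((l.drop (p + 1)).map (f · t)).prod)
      t := by
  induction l with
  | nil => simpa using hasDerivAt_const t (1 : R)
  | cons a l ih =>
    have H := (h a).mul ih
    simp only [List.map_cons, List.prod_cons]
    convert H using 1
    · rfl
    simp only [List.length_cons]
    rw [Fin.sum_univ_succ]
    simp [Finset.mul_sum, mul_assoc]

theorem aux_filter_lt (k : ℕ) (r : Fin k) :
    (List.finRange k).filter (fun s => s < r) = (List.finRange k).take r := by
  conv_lhs => rw [← List.take_append_drop (r : ℕ) (List.finRange k), List.filter_append]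
  have h1 : ((List.finRange k).take r).filter (fun s => decide (s < r)) =
      (List.finRange k).take r := by
    apply List.filter_eq_self.2
    intro a ha
    rw [List.mem_iff_getElem] at ha
    obtain ⟨j, hj, rfl⟩ := ha
    simp only [List.length_take, List.length_finRange, lt_min_iff] at hj
    simp only [List.getElem_take, List.getElem_finRange, decide_eq_true_eq, Fin.lt_def,
      Fin.coe_cast, Fin.val_mk]
    omega
  have h2 : ((List.finRange k).drop r).filter (fun s => decide (s < r)) = [] := by
    apply List.filter_eq_nil_iff.2
    intro a ha
    rw [List.mem_iff_getElem] at ha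
    obtain ⟨j, hj, rfl⟩ := ha
    simp only [List.length_drop, List.length_finRange] at hj
    simp only [List.getElem_drop, List.getElem_finRange, decide_eq_true_eq, Fin.lt_def,
      Fin.coe_cast, Fin.val_mk]
    omega
  rw [h1, h2, List.append_nil]

theorem aux_filter_gt (k : ℕ) (r : Fin k) :
    (List.finRange k).filter (fun s => r < s) = (List.finRange k).drop (r + 1) := by
  conv_lhs => rw [← List.take_append_drop ((r : ℕ) + 1) (List.finRange k), List.filter_append]
  have h1 : ((List.finRange k).take (r + 1)).filter (fun s => decide (r < s)) = [] := by
    apply List.filter_eq_nil_iff.2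
    intro a ha
    rw [List.mem_iff_getElem] at ha
    obtain ⟨j, hj, rfl⟩ := ha
    simp only [List.length_take, List.length_finRange, lt_min_iff] at hj
    simp only [List.getElem_take, List.getElem_finRange, decide_eq_true_eq, Fin.lt_def,
      Fin.coe_cast, Fin.val_mk]
    omega
  have h2 : ((List.finRange k).drop (r + 1)).filter (fun s => decide (r < s)) =
      (List.finRange k).drop (r + 1) := by
    apply List.filter_eq_self.2
    intro a ha
    rw [List.mem_iff_getElem] at ha
    obtain ⟨j, hj, rfl⟩ := ha
    simp only [List.length_drop, List.length_finRange] at hj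
    simp only [List.getElem_drop, List.getElem_finRange, decide_eq_true_eq, Fin.lt_def,
      Fin.coe_cast, Fin.val_mk]
    omega
  rw [h1, h2, List.nil_append]

theorem aux_trace_std (NN : ℕ) (P Q : Matrix (Fin NN) (Fin NN) ℂ) (b c : Fin NN) :
    Matrix.trace (P * Matrix.single b c 1 * Q) = (Q * P) c b := by
  rw [Matrix.trace_mul_cycle]
  simp [Matrix.trace, Matrix.mul_apply, Matrix.single, Matrix.diag, ite_and,
    Finset.sum_comm]

/-- The derivative of the trace of a matrix monomial with respect to the
`(b,c)` entry of `X_i` equals the `(c,b)` entry of Voiculescu's cyclic derivative: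
`∂ Tr Q(X)/∂(X_i)_{bc} = [(𝒟^{x_i}Q)(X)]_{cb}`. -/
theorem stmt1 (N n k : ℕ) (hN : 0 < N) (hn : 0 < n) (hk : 0 < k)
    (X : Fin n → Matrix (Fin N) (Fin N) ℂ) (ℓ : Fin k → Fin n) (i : Fin n)
    (b c : Fin N) :
    HasDerivAt
      (fun t : ℂ =>
        Matrix.trace (((List.finRange k).map (fun r =>
          X (ℓ r) + (t * (if ℓ r = i then (1 : ℂ) else 0)) •
            Matrix.single b c (1 : ℂ))).prod))
      (∑ r ∈ Finset.univ.filter (fun r : Fin k => ℓ r = i),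
        (((((List.finRange k).filter (fun s => r < s)).map (fun s => X (ℓ s))).prod) *
          ((((List.finRange k).filter (fun s => s < r)).map (fun s => X (ℓ s))).prod)) c b)
      0 := by
  classical
  set f : Fin k → ℂ → Matrix (Fin N) (Fin N) ℂ := fun r t =>
    X (ℓ r) + (t * (if ℓ r = i then (1 : ℂ) else 0)) • Matrix.single b c (1 : ℂ)
    with hf
  set f' : Fin k → Matrix (Fin N) (Fin N) ℂ := fun r =>
    (if ℓ r = i then (1 : ℂ) else 0) • Matrix.single b c (1 : ℂ) with hf'
  have hd : ∀ j, HasDerivAt (f j) (f' j) 0 := by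
    intro j
    have h1 : HasDerivAt (fun t : ℂ => t • f' j) ((1 : ℂ) • f' j) 0 :=
      (hasDerivAt_id (0 : ℂ)).smul_const (f' j)
    have h2 := h1.const_add (X (ℓ j))
    simp only [one_smul] at h2
    have e : f j = fun x => X (ℓ j) + x • f' j := by
      funext t
      simp [hf, hf', smul_smul, Matrix.smul_single]
    rw [e]; exact h2
  have key := aux_list_deriv (List.finRange k) f f' 0 hd
  have keyt : HasDerivAt
      (fun s => Matrix.trace (((List.finRange k).map (f · s)).prod))
      (Matrix.trace (∑ p : Fin (List.finRange k).length,
        (((List.finRange k).take p).map (f · 0)).prod * f' ((List.finRange k).get p) *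
          (((List.finRange k).drop (p + 1)).map (f · 0)).prod)) 0 :=
    (LinearMap.toContinuousLinearMap
      (Matrix.traceLinearMap (Fin N) ℂ ℂ)).hasFDerivAt.comp_hasDerivAt 0 key
  have hf0 : ∀ r, f r 0 = X (ℓ r) := by intro r; simp [hf]
  suffices hD : (∑ r ∈ Finset.univ.filter (fun r : Fin k => ℓ r = i),
        (((((List.finRange k).filter (fun s => r < s)).map (fun s => X (ℓ s))).prod) *
          ((((List.finRange k).filter (fun s => s < r)).map (fun s => X (ℓ s))).prod)) c b)
      = (Matrix.trace (∑ p : Fin (List.finRange k).length,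
        (((List.finRange k).take p).map (f · 0)).prod * f' ((List.finRange k).get p) *
          (((List.finRange k).drop (p + 1)).map (f · 0)).prod)) by
    rw [hD]; exact keyt
  rw [Matrix.trace_sum]
  have hlen : (List.finRange k).length = k := List.length_finRange
  rw [← Fintype.sum_equiv (finCongr hlen.symm) _ _ (fun r => rfl)]
  rw [Finset.sum_filter]
  apply Finset.sum_congr rfl
  intro r _
  have hget : (List.finRange k).get (finCongr hlen.symm r) = r := by
    rcases r with ⟨rv, hr⟩
    exact List.get_finRange _
  have hcoe : ((finCongr hlen.symm r : Fin (List.finRange k).length) : ℕ) = (r : ℕ) := rfl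
  rw [hget, hcoe]
  simp only [hf0]
  rw [← aux_filter_lt k r, ← aux_filter_gt k r]
  by_cases hri : ℓ r = i
  · rw [if_pos hri]
    simp only [hf', hri, if_pos rfl, if_true, eq_self_iff_true, one_smul]
    rw [aux_trace_std]
  · rw [if_neg hri]
    simp [hf', hri]
end

section
/- Let N, n, k be positive integers with k ≥ 2, X : Fin n → M_N(ℂ), ℓ : Fin k → Fin n a word, i, j ∈ Fin n, and a, b, c, d ∈ Fin N. Define G : ℂ × ℂ → ℂ by G(s,t) = Tr(∏_{r=0}^{k−1} (X_{ℓ(r)} + s·δ_{ℓ(r),j}·E(d,a) + t·δ_{ℓ(r),i}·E(b,c))). Then the mixed second partial derivative ∂²G/∂s∂t at (0,0) equals the sum over all ordered pairs (u,v) with u ≠ v, ℓ(u) = j and ℓ(v) = i of (π₁)_{a b} · (π₂)_{c d}, where π₁ = X_{ℓ(u+1)} X_{ℓ(u+2)} ⋯ X_{ℓ(v−1)} and π₂ = X_{ℓ(v+1)} ⋯ X_{ℓ(u−1)}, the indices being taken cyclically modulo k and a cyclically empty run of letters giving the identity matrix. (This is the directed-pairing formula for the second noncommutative derivative ∂^{x_i}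 ∘ ∂^{x_j} of the trace of a monomial.) -/
open Matrix

attribute [local instance] Matrix.linftyOpNormedRing Matrix.linftyOpNormedAlgebra

/-- The ordered product of the letters `X_{ℓ(u+1)} X_{ℓ(u+2)} ⋯ X_{ℓ(v−1)}`, indices taken
cyclically modulo `k`; a cyclically empty run of letters gives the identity matrix. -/
noncomputable def cycProd {N n k : ℕ} (X : Fin n → Matrix (Fin N) (Fin N) ℂ)
    (ℓ : Fin k → Fin n) (u v : Fin k) : Matrix (Fin N) (Fin N) ℂ :=
  ((List.range ((v.val + k - u.val) % k - 1)).map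
      (fun s => X (ℓ ⟨(u.val + 1 + s) % k,
        Nat.mod_lt _ ((Nat.zero_le u.val).trans_lt u.isLt)⟩))).prod

noncomputable def seg {N n k : ℕ} (hk0 : 0 < k) (X : Fin n → Matrix (Fin N) (Fin N) ℂ)
    (ℓ : Fin k → Fin n) (p q : ℕ) : Matrix (Fin N) (Fin N) ℂ :=
  ((List.range (q - p)).map (fun m => X (ℓ ⟨(p + m) % k, Nat.mod_lt _ hk0⟩))).prod

section lems
variable {N n k : ℕ} (hk0 : 0 < k) (X : Fin n → Matrix (Fin N) (Fin N) ℂ) (ℓ : Fin k → Fin n)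

lemma seg_prod (p q : ℕ) (hq : q ≤ k) :
    ((((List.finRange k).drop p).take (q - p)).map (fun r => X (ℓ r))).prod
      = seg hk0 X ℓ p q := by
  refine congrArg List.prod ?_
  apply List.ext_getElem
  · simp; omega
  · intro m h1 h2
    have hm : m < q - p := by simpa using h2
    have hpm : p + m < k := by omega
    simp [List.getElem_finRange, Nat.mod_eq_of_lt hpm, Fin.ext_iff]

lemma prod_drop (p : ℕ) (hp : p ≤ k) :
    (((List.finRange k).drop p).map (fun r => X (ℓ r))).prod = seg hk0 X ℓ p k := by
  have h := seg_prod hk0 X ℓ p k le_rfl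
  rwa [List.take_of_length_le (by simp)] at h

lemma prod_take (m : ℕ) (hm : m ≤ k) :
    (((List.finRange k).take m).map (fun r => X (ℓ r))).prod = seg hk0 X ℓ 0 m := by
  have h := seg_prod hk0 X ℓ 0 m hm
  simpa using h

lemma prod_mid (p m : ℕ) (h : p + m ≤ k) :
    ((((List.finRange k).drop p).take m).map (fun r => X (ℓ r))).prod
      = seg hk0 X ℓ p (p + m) := by
  have h2 := seg_prod hk0 X ℓ p (p + m) h
  rwa [Nat.add_sub_cancel_left] at h2

lemma cyc_lt (u v : Fin k) (h : u.val < v.val) :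
    cycProd X ℓ u v = seg hk0 X ℓ (u.val + 1) v.val := by
  have h1 : (v.val + k - u.val) % k = v.val - u.val := by
    have e : v.val + k - u.val = (v.val - u.val) + k := by omega
    rw [e, Nat.add_mod_right, Nat.mod_eq_of_lt (by omega)]
  unfold cycProd seg
  rw [h1, Nat.sub_sub]

lemma cyc_gt (u v : Fin k) (h : v.val < u.val) :
    cycProd X ℓ u v = seg hk0 X ℓ (u.val + 1) k * seg hk0 X ℓ 0 v.val := by
  have h1 : (v.val + k - u.val) % k = v.val + k - u.val := Nat.mod_eq_of_lt (by omega)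
  have h2 : v.val + k - u.val - 1 = (k - (u.val + 1)) + (v.val - 0) := by omega
  unfold cycProd seg
  rw [h1, h2, List.range_add, List.map_append, List.prod_append]
  congr 1
  rw [List.map_map]
  refine congrArg List.prod (List.map_congr_left ?_)
  intro m hm
  have hmv : m < v.val := by simpa using hm
  have e : u.val + 1 + (k - (u.val + 1) + m) = k + m := by omega
  have hval : (u.val + 1 + (k - (u.val + 1) + m)) % k = (0 + m) % k := by
    rw [e, Nat.zero_add, Nat.add_mod_left]
  simp only [Function.comp]
  exact congrArg X (congrArg ℓ (Fin.ext hval))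

variable (a b c d : Fin N)

lemma trE (M : Matrix (Fin N) (Fin N) ℂ) :
    Matrix.trace (Matrix.single d a (1:ℂ) * M) = M a d := by
  simp [Matrix.trace, Matrix.mul_apply, Matrix.single, Matrix.diag, ite_and]

lemma midE (P Q : Matrix (Fin N) (Fin N) ℂ) (x y : Fin N) :
    (P * Matrix.single b c (1:ℂ) * Q) x y = P x b * Q c y := by
  simp [Matrix.mul_apply, Matrix.single, ite_and, Finset.sum_ite_eq]

lemma pair_lt (u w : Fin k) (hw : w.val < u.val) :
    Matrix.trace (seg hk0 X ℓ 0 w.val * Matrix.single b c (1:ℂ)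
        * seg hk0 X ℓ (w.val + 1) u.val * Matrix.single d a (1:ℂ)
        * seg hk0 X ℓ (u.val + 1) k)
      = cycProd X ℓ u w a b * cycProd X ℓ w u c d := by
  set P := seg hk0 X ℓ 0 w.val
  set M := seg hk0 X ℓ (w.val + 1) u.val
  set R := seg hk0 X ℓ (u.val + 1) k
  set Ebc := Matrix.single b c (1:ℂ)
  set Eda := Matrix.single d a (1:ℂ)
  have e1 : P * Ebc * M * Eda * R = (P * (Ebc * M)) * (Eda * R) := by
    simp only [mul_assoc]
  rw [e1, Matrix.trace_mul_comm, mul_assoc, trE]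
  have e2 : R * (P * (Ebc * M)) = (R * P) * Ebc * M := by simp only [mul_assoc]
  rw [e2, midE, cyc_gt hk0 X ℓ u w hw, cyc_lt hk0 X ℓ w u hw]

lemma pair_gt (u w : Fin k) (hw : u.val < w.val) :
    Matrix.trace (seg hk0 X ℓ 0 u.val * Matrix.single d a (1:ℂ)
        * seg hk0 X ℓ (u.val + 1) w.val * Matrix.single b c (1:ℂ)
        * seg hk0 X ℓ (w.val + 1) k)
      = cycProd X ℓ u w a b * cycProd X ℓ w u c d := by
  set P := seg hk0 X ℓ 0 u.val
  set M := seg hk0 X ℓ (u.val + 1) w.val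
  set R := seg hk0 X ℓ (w.val + 1) k
  set Ebc := Matrix.single b c (1:ℂ)
  set Eda := Matrix.single d a (1:ℂ)
  have e1 : P * Eda * M * Ebc * R = P * (Eda * (M * Ebc * R)) := by
    simp only [mul_assoc]
  rw [e1, Matrix.trace_mul_comm, mul_assoc, trE]
  have e2 : M * Ebc * R * P = (M * Ebc) * (R * P) := by simp only [mul_assoc]
  have e2' : M * (Ebc * R) * P = (M * Ebc) * (R * P) := by simp only [mul_assoc]
  first
  | (rw [e2, midE, cyc_lt hk0 X ℓ u w hw, cyc_gt hk0 X ℓ w u hw])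
  | (rw [e2', midE, cyc_lt hk0 X ℓ u w hw, cyc_gt hk0 X ℓ w u hw])

lemma pairN_lt (uu ww : ℕ) (hu : uu < k) (hw : ww < uu) :
    Matrix.trace (seg hk0 X ℓ 0 ww * (Matrix.single b c (1:ℂ)
        * (seg hk0 X ℓ (ww + 1) uu * (Matrix.single d a (1:ℂ)
        * seg hk0 X ℓ (uu + 1) k))))
      = cycProd X ℓ ⟨uu, hu⟩ ⟨ww, lt_trans hw hu⟩ a b
        * cycProd X ℓ ⟨ww, lt_trans hw hu⟩ ⟨uu, hu⟩ c d := by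
  have h := pair_lt hk0 X ℓ a b c d ⟨uu, hu⟩ ⟨ww, lt_trans hw hu⟩ hw
  simp only [mul_assoc] at h
  exact h

lemma pairN_gt (uu ww : ℕ) (hw : ww < k) (hu : uu < ww) :
    Matrix.trace (seg hk0 X ℓ 0 uu * (Matrix.single d a (1:ℂ)
        * (seg hk0 X ℓ (uu + 1) ww * (Matrix.single b c (1:ℂ)
        * seg hk0 X ℓ (ww + 1) k))))
      = cycProd X ℓ ⟨uu, lt_trans hu hw⟩ ⟨ww, hw⟩ a b
        * cycProd X ℓ ⟨ww, hw⟩ ⟨uu, lt_trans hu hw⟩ c d := by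
  have h := pair_gt hk0 X ℓ a b c d ⟨uu, lt_trans hu hw⟩ ⟨ww, hw⟩ hu
  simp only [mul_assoc] at h
  exact h

end lems

section calc1
attribute [local instance] Matrix.linftyOpNormedRing Matrix.linftyOpNormedAlgebra

lemma hasDerivAt_listProd {𝔸 : Type*} [NormedRing 𝔸] [NormedAlgebra ℂ 𝔸] {ι : Type*}
    (l : List ι) (g : ι → ℂ → 𝔸) (g' : ι → 𝔸) (x : ℂ)
    (h : ∀ i ∈ l, HasDerivAt (g i) (g' i) x) :
    HasDerivAt (fun y => (l.map (g · y)).prod)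
      (∑ w : Fin l.length, ((l.take w).map (g · x)).prod * g' l[w]
        * ((l.drop (w+1)).map (g · x)).prod) x := by
  have H := HasFDerivAt.list_prod' (𝕜 := ℂ) (f := g)
    (f' := fun i => ContinuousLinearMap.smulRight (1 : ℂ →L[ℂ] ℂ) (g' i)) (l := l) (x := x)
    (fun i hi => (h i hi).hasFDerivAt)
  simpa [smul_smul, mul_assoc, smul_eq_mul] using H.hasDerivAt

lemma trace_hasDerivAt {N : ℕ} {f : ℂ → Matrix (Fin N) (Fin N) ℂ}
    {f' : Matrix (Fin N) (Fin N) ℂ} {x : ℂ} (hf : HasDerivAt f f' x) :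
    HasDerivAt (fun y => Matrix.trace (f y)) (Matrix.trace f') x := by
  let e := LinearMap.toContinuousLinearMap (Matrix.traceLinearMap (Fin N) ℂ ℂ)
  have := (ContinuousLinearMap.hasFDerivAt e).comp_hasDerivAt x hf
  exact this

end calc1


set_option maxRecDepth 8000

/-- Directed-pairing formula for the second noncommutative derivative
`∂^{x_i} ∘ ∂^{x_j}` of the trace of a monomial: the mixed second partial derivative at `(0,0)`
of `G(s,t) = Tr ∏_r (X_{ℓ(r)} + s·δ_{ℓ(r),j}·E(d,a) + t·δ_{ℓ(r),i}·E(b,c))` equals the sum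
over all ordered pairs `(u,v)`, `u ≠ v`, `ℓ(u) = j`, `ℓ(v) = i` of `(π₁)_{ab}·(π₂)_{cd}`. -/
theorem stmt2 (N n k : ℕ) (hN : 0 < N) (hn : 0 < n) (hk : 2 ≤ k)
    (X : Fin n → Matrix (Fin N) (Fin N) ℂ) (ℓ : Fin k → Fin n) (i j : Fin n)
    (a b c d : Fin N) :
    deriv (fun t : ℂ => deriv (fun s : ℂ =>
        Matrix.trace (((List.finRange k).map (fun r =>
          X (ℓ r) + (s * (if ℓ r = j then (1 : ℂ) else 0)) • Matrix.single d a (1 : ℂ)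
            + (t * (if ℓ r = i then (1 : ℂ) else 0)) •
              Matrix.single b c (1 : ℂ))).prod)) 0) 0
      = ∑ p ∈ Finset.univ.filter (fun p : Fin k × Fin k =>
            p.1 ≠ p.2 ∧ ℓ p.1 = j ∧ ℓ p.2 = i),
          (cycProd X ℓ p.1 p.2) a b * (cycProd X ℓ p.2 p.1) c d := by
  have hk0 : 0 < k := by omega
  have inner_eq : ∀ t : ℂ,
      deriv (fun s : ℂ => Matrix.trace (((List.finRange k).map (fun r =>
          X (ℓ r) + (s * (if ℓ r = j then (1 : ℂ) else 0)) • Matrix.single d a (1 : ℂ)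
            + (t * (if ℓ r = i then (1 : ℂ) else 0)) •
              Matrix.single b c (1 : ℂ))).prod)) 0
      = ∑ w : Fin (List.finRange k : List (Fin k)).length,
          Matrix.trace (
            (((List.finRange k).take w).map (fun r =>
              X (ℓ r) + (t * (if ℓ r = i then (1 : ℂ) else 0)) • Matrix.single b c (1:ℂ))).prod
            * ((if ℓ ((List.finRange k)[(w:ℕ)] : Fin k) = j then (1:ℂ) else 0) • Matrix.single d a (1:ℂ))
            * (((List.finRange k).drop (w+1)).map (fun r =>
              X (ℓ r) + (t * (if ℓ r = i then (1 : ℂ) else 0)) • Matrix.single b c (1:ℂ))).prod) := by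
    intro t
    have hd : ∀ r ∈ List.finRange k, HasDerivAt
        (fun s : ℂ => X (ℓ r) + (s * (if ℓ r = j then (1:ℂ) else 0)) • Matrix.single d a (1:ℂ)
          + (t * (if ℓ r = i then (1:ℂ) else 0)) • Matrix.single b c (1:ℂ))
        ((if ℓ r = j then (1:ℂ) else 0) • Matrix.single d a (1:ℂ)) 0 := by
      intro r _
      have h1 : HasDerivAt (fun s : ℂ => (s * (if ℓ r = j then (1:ℂ) else 0)) • Matrix.single d a (1:ℂ))
          ((1 * (if ℓ r = j then (1:ℂ) else 0)) • Matrix.single d a (1:ℂ)) 0 :=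
        ((hasDerivAt_id 0).mul_const _).smul_const _
      convert ((hasDerivAt_const 0 (X (ℓ r))).add h1).add (hasDerivAt_const 0 ((t * (if ℓ r = i then (1:ℂ) else 0)) • Matrix.single b c (1:ℂ))) using 1
      case e'_9 => simp
      all_goals rfl
    have H := (trace_hasDerivAt (hasDerivAt_listProd (List.finRange k) _ _ 0 hd)).deriv
    simp only [zero_mul, zero_smul, add_zero, Matrix.trace_sum] at H
    exact H
  simp only [inner_eq]
  have hA : ∀ (r : Fin k), HasDerivAt
      (fun t : ℂ => X (ℓ r) + (t * (if ℓ r = i then (1:ℂ) else 0)) • Matrix.single b c (1:ℂ))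
      ((if ℓ r = i then (1:ℂ) else 0) • Matrix.single b c (1:ℂ)) 0 := by
    intro r
    have h1 : HasDerivAt (fun t : ℂ => (t * (if ℓ r = i then (1:ℂ) else 0)) • Matrix.single b c (1:ℂ))
        ((1 * (if ℓ r = i then (1:ℂ) else 0)) • Matrix.single b c (1:ℂ)) 0 :=
      ((hasDerivAt_id 0).mul_const _).smul_const _
    convert (hasDerivAt_const 0 (X (ℓ r))).add h1 using 1
    case e'_9 => simp
    all_goals rfl
  have H2 := (HasDerivAt.sum (u := (Finset.univ : Finset (Fin (List.finRange k : List (Fin k)).length)))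
    (fun (u : Fin (List.finRange k : List (Fin k)).length) _ =>
      trace_hasDerivAt (((hasDerivAt_listProd ((List.finRange k).take (u:ℕ)) _ _ 0
          (fun r _ => hA r)).mul_const
          ((if ℓ ((List.finRange k)[(u:ℕ)] : Fin k) = j then (1:ℂ) else 0) • Matrix.single d a (1:ℂ))).mul
        (hasDerivAt_listProd ((List.finRange k).drop ((u:ℕ)+1)) _ _ 0 (fun r _ => hA r))))).deriv
  simp only [Finset.sum_fn, Pi.mul_apply] at H2
  rw [H2]
  simp only [zero_mul, zero_smul, add_zero]
  have hlen : (List.finRange k : List (Fin k)).length = k := List.length_finRange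
  set G : ℕ → ℕ → ℂ := fun uu ww =>
    (if ℓ ⟨uu % k, Nat.mod_lt uu hk0⟩ = j then (1:ℂ) else 0) *
    ((if ℓ ⟨ww % k, Nat.mod_lt ww hk0⟩ = i then (1:ℂ) else 0) *
     (cycProd X ℓ ⟨uu % k, Nat.mod_lt uu hk0⟩ ⟨ww % k, Nat.mod_lt ww hk0⟩ a b *
      cycProd X ℓ ⟨ww % k, Nat.mod_lt ww hk0⟩ ⟨uu % k, Nat.mod_lt uu hk0⟩ c d)) with hG
  have hcongrFin : ∀ (F : Fin k → ℂ),
      (∑ w : Fin k, F w) = ∑ ww ∈ Finset.range k, F ⟨ww % k, Nat.mod_lt ww hk0⟩ := by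
    intro F
    rw [← Fin.sum_univ_eq_sum_range (fun ww => F ⟨ww % k, Nat.mod_lt ww hk0⟩) k]
    refine Finset.sum_congr rfl fun w _ => ?_
    congr 1
    exact (Fin.ext (Nat.mod_eq_of_lt w.isLt)).symm
  have hsplit : ∀ (f : ℕ → ℂ) (uu : ℕ), uu < k → ∑ ww ∈ Finset.range k, f ww
      = (∑ ww ∈ Finset.range uu, f ww)
        + (f uu + ∑ m ∈ Finset.range (k - (uu+1)), f (uu + 1 + m)) := by
    intro f uu hu
    rw [Finset.range_eq_Ico, ← Finset.sum_Ico_consecutive _ (Nat.zero_le uu) (le_of_lt hu),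
      Finset.sum_eq_sum_Ico_succ_bot hu, Finset.sum_Ico_eq_sum_range,
      Finset.sum_Ico_eq_sum_range]
    simp
  have hRHS : (∑ p ∈ Finset.univ.filter (fun p : Fin k × Fin k =>
            p.1 ≠ p.2 ∧ ℓ p.1 = j ∧ ℓ p.2 = i),
          (cycProd X ℓ p.1 p.2) a b * (cycProd X ℓ p.2 p.1) c d)
      = ∑ u : Fin (List.finRange k : List (Fin k)).length,
          ((∑ w ∈ Finset.range (u : ℕ), G (u : ℕ) w)
            + ∑ m ∈ Finset.range (k - ((u : ℕ) + 1)), G (u : ℕ) ((u : ℕ) + 1 + m)) := by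
    rw [Finset.sum_filter, Fintype.sum_prod_type, hcongrFin,
      Fin.sum_univ_eq_sum_range (fun uu => (∑ w ∈ Finset.range uu, G uu w)
        + ∑ m ∈ Finset.range (k - (uu + 1)), G uu (uu + 1 + m))
        ((List.finRange k : List (Fin k)).length), hlen]
    refine Finset.sum_congr rfl fun uu huu => ?_
    have hu : uu < k := Finset.mem_range.mp huu
    beta_reduce
    rw [hcongrFin, hsplit _ uu hu, if_neg, zero_add]
    swap
    · simp
    congr 1
    · refine Finset.sum_congr rfl fun ww hww => ?_
      have hwu : ww < uu := Finset.mem_range.mp hww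
      have hwk : ww < k := lt_trans hwu hu
      have hne : (⟨uu % k, Nat.mod_lt uu hk0⟩ : Fin k) ≠ ⟨ww % k, Nat.mod_lt ww hk0⟩ := by
        simp only [ne_eq, Fin.mk.injEq, Nat.mod_eq_of_lt hu, Nat.mod_eq_of_lt hwk]
        omega
      by_cases h1 : ℓ ⟨uu % k, Nat.mod_lt uu hk0⟩ = j <;>
        by_cases h2 : ℓ ⟨ww % k, Nat.mod_lt ww hk0⟩ = i <;>
        simp [hG, h1, h2, hne]
    · refine Finset.sum_congr rfl fun m hm => ?_
      have hmk : uu + 1 + m < k := by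
        have := Finset.mem_range.mp hm; omega
      have hne : (⟨uu % k, Nat.mod_lt uu hk0⟩ : Fin k)
          ≠ ⟨(uu + 1 + m) % k, Nat.mod_lt (uu + 1 + m) hk0⟩ := by
        simp only [ne_eq, Fin.mk.injEq, Nat.mod_eq_of_lt hu, Nat.mod_eq_of_lt hmk]
        omega
      by_cases h1 : ℓ ⟨uu % k, Nat.mod_lt uu hk0⟩ = j <;>
        by_cases h2 : ℓ ⟨(uu + 1 + m) % k, Nat.mod_lt (uu + 1 + m) hk0⟩ = i <;>
        simp [hG, h1, h2, hne]
  rw [hRHS]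
  refine Finset.sum_congr rfl fun u _ => ?_
  have hu : (u : ℕ) < k := by have h := u.isLt; omega
  simp only [Matrix.trace_add, Finset.sum_mul, Finset.mul_sum, Matrix.trace_sum]
  congr 1
  · -- first sum : pairs (u, w) with w < u
    have hlen1 : ((List.finRange k).take (u : ℕ)).length = (u : ℕ) := by
      rw [List.length_take]; omega
    rw [← Fin.sum_univ_eq_sum_range (fun ww => G (u : ℕ) ww) (u : ℕ)]
    refine Finset.sum_equiv (finCongr hlen1) (by simp) ?_
    intro w _
    have hw : (w : ℕ) < (u : ℕ) := by have h := w.isLt; omega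
    have hwk : (w : ℕ) < k := lt_trans hw hu
    simp only [finCongr_apply, Fin.coe_cast, Fin.getElem_fin, List.take_take, List.drop_take,
      List.getElem_take, List.getElem_finRange, Fin.cast_mk, min_eq_left hw.le]
    rw [prod_take hk0 X ℓ (w : ℕ) (le_of_lt hwk),
      prod_mid hk0 X ℓ ((w : ℕ) + 1) ((u : ℕ) - ((w : ℕ) + 1)) (by omega),
      prod_drop hk0 X ℓ ((u : ℕ) + 1) (by omega),
      show ((w : ℕ) + 1) + ((u : ℕ) - ((w : ℕ) + 1)) = (u : ℕ) from by omega]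
    simp only [smul_mul_assoc, mul_smul_comm, Matrix.trace_smul, smul_eq_mul, mul_assoc]
    rw [pairN_lt hk0 X ℓ a b c d (u : ℕ) (w : ℕ) hu hw]
    simp only [hG, Nat.mod_eq_of_lt hu, Nat.mod_eq_of_lt hwk]
    try ring
  · -- second sum : pairs (u, u+1+m)
    have hlen2 : ((List.finRange k).drop ((u : ℕ) + 1)).length = k - ((u : ℕ) + 1) := by
      simp
    rw [← Fin.sum_univ_eq_sum_range (fun m => G (u : ℕ) ((u : ℕ) + 1 + m)) (k - ((u : ℕ) + 1))]
    refine Finset.sum_equiv (finCongr hlen2) (by simp) ?_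
    intro m _
    have hm : (m : ℕ) < k - ((u : ℕ) + 1) := by have h := m.isLt; omega
    have hwk : (u : ℕ) + 1 + (m : ℕ) < k := by omega
    simp only [finCongr_apply, Fin.coe_cast, Fin.getElem_fin, List.drop_drop,
      List.getElem_drop, List.getElem_finRange, Fin.cast_mk]
    rw [prod_take hk0 X ℓ (u : ℕ) hu.le,
      prod_mid hk0 X ℓ ((u : ℕ) + 1) (m : ℕ) (by omega),
      prod_drop hk0 X ℓ (((u : ℕ) + 1) + ((m : ℕ) + 1)) (by omega),
      show ((u : ℕ) + 1) + ((m : ℕ) + 1) = ((u : ℕ) + 1 + (m : ℕ)) + 1 from by omega]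
    simp only [smul_mul_assoc, mul_smul_comm, Matrix.trace_smul, smul_eq_mul, mul_assoc]
    rw [pairN_gt hk0 X ℓ a b c d (u : ℕ) ((u : ℕ) + 1 + (m : ℕ)) hwk (by omega)]
    simp only [hG, Nat.mod_eq_of_lt hu, Nat.mod_eq_of_lt hwk]
    try ring
end

section
/- Let N be a positive integer, X ∈ M_N(ℂ), m ≥ 2 a natural number, and a, b, c, d ∈ Fin N. Define G : ℂ × ℂ → ℂ by G(s,t) = Tr((X + s·E(d,a) + t·E(b,c))^m). Then the mixed second partial derivative ∂²G/∂s∂t at (0,0) equals m · Σ_{ℓ=0}^{m−2} (X^ℓ)_{ab} · (X^{m−2−ℓ})_{cd}. Equivalently, the noncommutative Laplacian of Tr(X^m/m) in one Hermitian variable is Σ_{ℓ=0}^{m−2} X^ℓ ⊗ X^{m−2−ℓ}. -/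
open Matrix

attribute [local instance] Matrix.linftyOpNormedRing Matrix.linftyOpNormedAlgebra

namespace Stmt9Aux

variable {N : ℕ}

noncomputable def trCLM (N : ℕ) : Matrix (Fin N) (Fin N) ℂ →L[ℂ] ℂ :=
  LinearMap.toContinuousLinearMap (Matrix.traceLinearMap (Fin N) ℂ ℂ)

@[simp] lemma trCLM_apply (M : Matrix (Fin N) (Fin N) ℂ) : trCLM N M = Matrix.trace M := rfl

lemma hasDerivAt_affine (C B : Matrix (Fin N) (Fin N) ℂ) :
    HasDerivAt (fun s : ℂ => C + s • B) B 0 := by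
  have h := ((hasDerivAt_id (0:ℂ)).smul_const B).const_add C
  simp only [id_eq, one_smul] at h
  exact h

lemma hasDerivAt_pow (C B : Matrix (Fin N) (Fin N) ℂ) (n : ℕ) :
    HasDerivAt (fun s : ℂ => (C + s • B) ^ n)
      (∑ l ∈ Finset.range n, C ^ l * B * C ^ (n - 1 - l)) 0 := by
  induction n with
  | zero =>
    simp only [pow_zero, Finset.range_zero, Finset.sum_empty]
    exact hasDerivAt_const (0:ℂ) (1 : Matrix (Fin N) (Fin N) ℂ)
  | succ n ih =>
    have h := (hasDerivAt_affine C B).mul ih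
    simp only [zero_smul, add_zero] at h
    have heq : ((fun s : ℂ => C + s • B) * fun s : ℂ => (C + s • B) ^ n)
        = fun s : ℂ => (C + s • B) ^ (n + 1) := by
      funext s; simp only [Pi.mul_apply]; rw [pow_succ']
    rw [heq] at h
    refine h.congr_deriv ?_
    symm
    rw [Finset.sum_range_succ', Finset.mul_sum]
    have key : ∀ i ∈ Finset.range n,
        C ^ (i + 1) * B * C ^ (n + 1 - 1 - (i + 1)) = C * (C ^ i * B * C ^ (n - 1 - i)) := by
      intro i hi
      have h1 : n + 1 - 1 - (i + 1) = n - 1 - i := by omega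
      rw [h1]
      simp only [pow_succ', mul_assoc]
    rw [Finset.sum_congr rfl key]
    simp [add_comm]

lemma hasDerivAt_trace_pow (C B : Matrix (Fin N) (Fin N) ℂ) (n : ℕ) :
    HasDerivAt (fun s : ℂ => Matrix.trace ((C + s • B) ^ n))
      ((n : ℂ) * Matrix.trace (C ^ (n - 1) * B)) 0 := by
  have h := (trCLM N).hasFDerivAt.comp_hasDerivAt 0 (hasDerivAt_pow C B n)
  have hval : trCLM N (∑ l ∈ Finset.range n, C ^ l * B * C ^ (n - 1 - l))
      = (n : ℂ) * Matrix.trace (C ^ (n - 1) * B) := by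
    rw [trCLM_apply, Matrix.trace_sum]
    have key : ∀ l ∈ Finset.range n,
        Matrix.trace (C ^ l * B * C ^ (n - 1 - l)) = Matrix.trace (C ^ (n - 1) * B) := by
      intro l hl
      rw [Matrix.trace_mul_comm, ← mul_assoc, ← pow_add]
      have h2 : n - 1 - l + l = n - 1 := by
        have := Finset.mem_range.mp hl; omega
      rw [h2]
    rw [Finset.sum_congr rfl key, Finset.sum_const, Finset.card_range, nsmul_eq_mul]
  rw [← hval]
  exact h

lemma trace_mul_std (M : Matrix (Fin N) (Fin N) ℂ) (i j : Fin N) :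
    Matrix.trace (M * Matrix.single i j (1:ℂ)) = M j i := by
  rw [Matrix.trace]
  rw [Finset.sum_eq_single j]
  · simp
  · intro k _ hk
    simp [Matrix.diag, Matrix.mul_single_apply_of_ne (hbj := hk)]
  · simp

lemma std_entry (P Q : Matrix (Fin N) (Fin N) ℂ) (a b c d : Fin N) :
    (P * Matrix.single b c (1:ℂ) * Q) a d = P a b * Q c d := by
  rw [Matrix.mul_apply, Finset.sum_eq_single c]
  · simp
  · intro k _ hk
    simp [Matrix.mul_single_apply_of_ne (hbj := hk)]
  · simp

end Stmt9Aux

open Stmt9Aux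

/-- The noncommutative Laplacian of `Tr(X^m/m)` in one Hermitian variable:
the mixed second partial derivative at `(0,0)` of
`G(s,t) = Tr((X + s·E(d,a) + t·E(b,c))^m)` equals
`m · Σ_{ℓ=0}^{m−2} (X^ℓ)_{ab}·(X^{m−2−ℓ})_{cd}`. -/
theorem stmt9 (N : ℕ) (hN : 0 < N) (X : Matrix (Fin N) (Fin N) ℂ) (m : ℕ) (hm : 2 ≤ m)
    (a b c d : Fin N) :
    deriv (fun t : ℂ => deriv (fun s : ℂ =>
        Matrix.trace ((X + s • Matrix.single d a (1 : ℂ)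
          + t • Matrix.single b c (1 : ℂ)) ^ m)) 0) 0
      = (m : ℂ) * ∑ l ∈ Finset.range (m - 1), (X ^ l) a b * (X ^ (m - 2 - l)) c d := by
  set E : Matrix (Fin N) (Fin N) ℂ := Matrix.single d a (1:ℂ) with hE
  set F : Matrix (Fin N) (Fin N) ℂ := Matrix.single b c (1:ℂ) with hF
  have houter : (fun t : ℂ => deriv (fun s : ℂ =>
      Matrix.trace ((X + s • E + t • F) ^ m)) 0)
      = fun t : ℂ => (m : ℂ) * Matrix.trace ((X + t • F) ^ (m - 1) * E) := by
    funext t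
    have heq : (fun s : ℂ => Matrix.trace ((X + s • E + t • F) ^ m))
        = fun s : ℂ => Matrix.trace (((X + t • F) + s • E) ^ m) := by
      funext s; rw [add_right_comm]
    rw [heq]
    exact (hasDerivAt_trace_pow (X + t • F) E m).deriv
  rw [houter]
  have hpow := (hasDerivAt_pow X F (m - 1)).mul_const E
  have h2 := ((trCLM N).hasFDerivAt.comp_hasDerivAt 0 hpow).const_mul (m : ℂ)
  have h2' : HasDerivAt (fun t : ℂ => (m : ℂ) * Matrix.trace ((X + t • F) ^ (m - 1) * E))
      ((m : ℂ) * Matrix.trace ((∑ l ∈ Finset.range (m - 1),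
        X ^ l * F * X ^ (m - 1 - 1 - l)) * E)) 0 := by
    exact h2
  rw [h2'.deriv]
  congr 1
  rw [Finset.sum_mul, Matrix.trace_sum]
  apply Finset.sum_congr rfl
  intro l hl
  rw [hE, trace_mul_std, hF, std_entry]
  have h3 : m - 1 - 1 - l = m - 2 - l := by omega
  rw [h3]
end

section
/- Let a, b ∈ ℕ, m = 2a + 2b, and let w : Fin m → Fin 2 be a word taking the value 0 exactly 2a times and the value 1 exactly 2b times. Then the signed sum Σ_χ (−1)^{cr(χ)}, taken over all letter-preserving perfect matchings χ of Fin m for w, is an odd integer; in particular it is nonzero. (This is the combinatorial core of the nonvanishing of single-trace coefficients in the Spectral Action of a 2-dimensional fuzzy geometry.) -/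
/-- The letter-preserving perfect matchings of `Fin m` for the word `w`, encoded as
fixed-point-free involutive permutations `f` (the matching being the set of pairs `{x, f x}`)
with `w (f x) = w x` for all `x`. -/
def lpMatchings (m : ℕ) (w : Fin m → Fin 2) : Finset (Equiv.Perm (Fin m)) :=
  Finset.univ.filter (fun f =>
    (∀ x, f x ≠ x) ∧ (∀ x, f (f x) = x) ∧ (∀ x, w (f x) = w x))

/-- The crossing number of a matching (encoded as an involution `f`): the number of pairs of
distinct chords `{u, f u}`, `{u', f u'}` (each written with its smaller element first) with
`u < u' < f u < f u'`. -/
def crossNum {m : ℕ} (f : Equiv.Perm (Fin m)) : ℕ :=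
  (Finset.univ.filter (fun p : Fin m × Fin m =>
    p.1 < f p.1 ∧ p.2 < f p.2 ∧ p.1 < p.2 ∧ p.2 < f p.1 ∧ f p.1 < f p.2)).card

open Finset

section Aux

variable {α : Type*} [Fintype α] [DecidableEq α]

/-- Letter-preserving matchings of a finite subset `s`. -/
def matchP (w : α → Fin 2) (s : Finset α) : Finset (Equiv.Perm α) :=
  univ.filter (fun f =>
    (∀ x, x ∉ s → f x = x) ∧ (∀ x ∈ s, f x ≠ x) ∧ (∀ x, f (f x) = x) ∧ (∀ x, w (f x) = w x))

lemma mem_matchP {w : α → Fin 2} {s : Finset α} {f : Equiv.Perm α} :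
    f ∈ matchP w s ↔ (∀ x, x ∉ s → f x = x) ∧ (∀ x ∈ s, f x ≠ x) ∧ (∀ x, f (f x) = x) ∧
      (∀ x, w (f x) = w x) := by
  simp [matchP]

lemma matchP_maps {w : α → Fin 2} {s : Finset α} {f : Equiv.Perm α}
    (hf : f ∈ matchP w s) {x : α} (hx : x ∈ s) : f x ∈ s := by
  obtain ⟨h1, h2, h3, h4⟩ := mem_matchP.mp hf
  by_contra hc
  have := h1 (f x) hc
  rw [h3 x] at this
  exact h2 x hx this.symm

lemma odd_sum_of_odd {β : Type*} (T : Finset β) (g : β → ℕ)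
    (hg : ∀ y ∈ T, Odd (g y)) (hT : Odd T.card) : Odd (∑ y ∈ T, g y) := by
  rw [Nat.odd_iff, Finset.sum_nat_mod, Finset.sum_congr rfl
    (fun y hy => Nat.odd_iff.mp (hg y hy))]
  simp [Nat.odd_iff.mp hT]

lemma odd_matchP (w : α → Fin 2) (s : Finset α) :
    (∀ c, Even ((s.filter (fun x => w x = c)).card)) → Odd (matchP w s).card := by
  induction s using Finset.strongInduction with
  | _ s ih =>
  intro h
  rcases s.eq_empty_or_nonempty with rfl | hne
  · have : matchP w (∅ : Finset α) = {1} := by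
      ext f
      simp only [mem_matchP, mem_singleton, notMem_empty]
      constructor
      · rintro ⟨h1, -, -, -⟩
        exact Equiv.ext fun x => h1 x (by simp)
      · rintro rfl; simp
    rw [this]; simp
  · obtain ⟨x0, hx0s, -⟩ : ∃ x0 ∈ s, True := ⟨hne.choose, hne.choose_spec, trivial⟩
    set T := (s.filter (fun y => w y = w x0)).erase x0 with hTdef
    have hx0f : x0 ∈ s.filter (fun y => w y = w x0) := by simp [hx0s]
    have hmap : ∀ f ∈ matchP w s, f x0 ∈ T := by
      intro f hf
      obtain ⟨h1, h2, h3, h4⟩ := mem_matchP.mp hf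
      simp only [hTdef, mem_erase, mem_filter]
      exact ⟨h2 x0 hx0s, matchP_maps hf hx0s, h4 x0⟩
    rw [Finset.card_eq_sum_card_fiberwise hmap]
    apply odd_sum_of_odd
    · intro y hy
      obtain ⟨hyne, hys, hwy⟩ : y ≠ x0 ∧ y ∈ s ∧ w y = w x0 := by
        simpa [hTdef, mem_erase, mem_filter, and_assoc] using hy
      set s' := (s.erase x0).erase y with hs'def
      have hx0ns' : x0 ∉ s' := by simp [hs'def, hyne.symm]
      have hyns' : y ∉ s' := by simp [hs'def]
      have hmem_s' : ∀ z, z ∈ s' ↔ z ≠ y ∧ z ≠ x0 ∧ z ∈ s := by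
        intro z; simp [hs'def, mem_erase]
      have key : ((matchP w s).filter (fun f => f x0 = y)).card = (matchP w s').card := by
        apply Finset.card_nbij' (fun f => Equiv.swap x0 y * f) (fun f => Equiv.swap x0 y * f)
        · -- forward
          intro f hf
          rw [mem_coe, mem_filter] at hf
          obtain ⟨hfP, hfx0⟩ := hf
          obtain ⟨h1, h2, h3, h4⟩ := mem_matchP.mp hfP
          have hfy : f y = x0 := by rw [← hfx0, h3]
          have fswap : ∀ z, f (Equiv.swap x0 y z) = Equiv.swap x0 y (f z) := by
            intro z
            by_cases hz : z = x0
            · subst hz; simp [hfx0, hfy]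
            · by_cases hz' : z = y
              · subst hz'; simp [hfx0, hfy]
              · have hn1 : f z ≠ x0 := fun hc => hz' (by rw [← h3 z, hc, hfx0])
                have hn2 : f z ≠ y := fun hc => hz (by rw [← h3 z, hc, hfy])
                rw [Equiv.swap_apply_of_ne_of_ne hz hz',
                  Equiv.swap_apply_of_ne_of_ne hn1 hn2]
          rw [mem_coe, mem_matchP]
          refine ⟨?_, ?_, ?_, ?_⟩
          · intro x hx
            rw [hmem_s'] at hx
            push_neg at hx
            by_cases hxy : x = y
            · subst hxy
              simp [Equiv.Perm.mul_apply, hfy]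
            · by_cases hxx0 : x = x0
              · subst hxx0
                simp [Equiv.Perm.mul_apply, hfx0]
              · have hxs : x ∉ s := hx hxy hxx0
                have : f x = x := h1 x hxs
                simp [Equiv.Perm.mul_apply, this,
                  Equiv.swap_apply_of_ne_of_ne hxx0 hxy]
          · intro x hx
            rw [hmem_s'] at hx
            obtain ⟨hxy, hxx0, hxs⟩ := hx
            have hfx_ne_x0 : f x ≠ x0 := by
              intro hc
              apply hxy
              rw [← h3 x, hc, hfx0]
            have hfx_ne_y : f x ≠ y := by
              intro hc
              apply hxx0
              rw [← h3 x, hc, hfy]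
            simp only [Equiv.Perm.mul_apply]
            rw [Equiv.swap_apply_of_ne_of_ne hfx_ne_x0 hfx_ne_y]
            exact h2 x hxs
          · intro x
            simp only [Equiv.Perm.mul_apply]
            rw [fswap, Equiv.swap_apply_self, h3]
          · intro x
            have hwswap : ∀ z, w (Equiv.swap x0 y z) = w z := by
              intro z
              by_cases hz : z = x0
              · subst hz; rw [Equiv.swap_apply_left, hwy]
              · by_cases hz' : z = y
                · subst hz'; rw [Equiv.swap_apply_right, hwy]
                · rw [Equiv.swap_apply_of_ne_of_ne hz hz']
            simp only [Equiv.Perm.mul_apply]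
            rw [hwswap, h4]
        · -- backward
          intro g hg
          obtain ⟨h1, h2, h3, h4⟩ := mem_matchP.mp hg
          have hgx0 : g x0 = x0 := h1 x0 hx0ns'
          have hgy : g y = y := h1 y hyns'
          have fswap : ∀ z, g (Equiv.swap x0 y z) = Equiv.swap x0 y (g z) := by
            intro z
            by_cases hz : z = x0
            · subst hz; simp [hgx0, hgy]
            · by_cases hz' : z = y
              · subst hz'; simp [hgx0, hgy]
              · have hn1 : g z ≠ x0 := fun hc => hz (by rw [← h3 z, hc, hgx0])
                have hn2 : g z ≠ y := fun hc => hz' (by rw [← h3 z, hc, hgy])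
                rw [Equiv.swap_apply_of_ne_of_ne hz hz',
                  Equiv.swap_apply_of_ne_of_ne hn1 hn2]
          rw [mem_coe, mem_filter, mem_matchP]
          refine ⟨⟨?_, ?_, ?_, ?_⟩, ?_⟩
          · intro x hx
            have hxx0 : x ≠ x0 := fun hc => hx (hc ▸ hx0s)
            have hxy : x ≠ y := fun hc => hx (hc ▸ hys)
            have hxs' : x ∉ s' := by rw [hmem_s']; push_neg; intro _ _; exact hx
            simp [Equiv.Perm.mul_apply, h1 x hxs',
              Equiv.swap_apply_of_ne_of_ne hxx0 hxy]
          · intro x hxs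
            by_cases hxx0 : x = x0
            · subst hxx0
              simp only [Equiv.Perm.mul_apply, hgx0, Equiv.swap_apply_left]
              exact hyne
            · by_cases hxy : x = y
              · subst hxy
                simp only [Equiv.Perm.mul_apply, hgy, Equiv.swap_apply_right]
                exact Ne.symm hyne
              · have hxs' : x ∈ s' := by rw [hmem_s']; exact ⟨hxy, hxx0, hxs⟩
                have hgxs' : g x ∈ s' := matchP_maps hg hxs'
                have hgx_ne_x0 : g x ≠ x0 := fun hc => hx0ns' (hc ▸ hgxs')
                have hgx_ne_y : g x ≠ y := fun hc => hyns' (hc ▸ hgxs')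
                simp only [Equiv.Perm.mul_apply]
                rw [Equiv.swap_apply_of_ne_of_ne hgx_ne_x0 hgx_ne_y]
                exact h2 x hxs'
          · intro x
            simp only [Equiv.Perm.mul_apply]
            rw [fswap, Equiv.swap_apply_self, h3]
          · intro x
            have hwswap : ∀ z, w (Equiv.swap x0 y z) = w z := by
              intro z
              by_cases hz : z = x0
              · subst hz; rw [Equiv.swap_apply_left, hwy]
              · by_cases hz' : z = y
                · subst hz'; rw [Equiv.swap_apply_right, hwy]
                · rw [Equiv.swap_apply_of_ne_of_ne hz hz']
            simp only [Equiv.Perm.mul_apply]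
            rw [hwswap, h4]
          · simp [Equiv.Perm.mul_apply, hgx0]
        · intro f _
          simp [← mul_assoc, Equiv.swap_mul_self]
        · intro g _
          simp [← mul_assoc, Equiv.swap_mul_self]
      rw [key]
      apply ih
      · exact lt_of_le_of_lt (erase_subset y (s.erase x0)) (erase_ssubset hx0s)
      · intro c
        have hcomm : s'.filter (fun x => w x = c)
            = ((s.filter (fun x => w x = c)).erase x0).erase y := by
          rw [hs'def, filter_erase, filter_erase]
        rw [hcomm]
        by_cases hc : c = w x0
        · subst hc
          have hx0m : x0 ∈ s.filter (fun x => w x = w x0) := by simp [hx0s]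
          have hym : y ∈ (s.filter (fun x => w x = w x0)).erase x0 := by
            simp [hys, hwy, hyne]
          have h2le : 2 ≤ (s.filter (fun x => w x = w x0)).card :=
            Finset.one_lt_card.mpr ⟨x0, hx0m, y, by simp [hys, hwy], hyne.symm⟩
          rw [card_erase_of_mem hym, card_erase_of_mem hx0m]
          have := h (w x0)
          rw [Nat.even_iff] at this ⊢
          omega
        · have hx0n : x0 ∉ s.filter (fun x => w x = c) := by
            simp only [mem_filter]
            rintro ⟨-, hcx⟩
            exact hc hcx.symm
          have hyn : y ∉ (s.filter (fun x => w x = c)).erase x0 := by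
            simp only [mem_erase, mem_filter]
            rintro ⟨-, -, hcy⟩
            exact hc (hcy.symm.trans hwy)
          rw [erase_eq_of_notMem hyn, erase_eq_of_notMem hx0n]
          exact h c
    · have hTcard : T.card = (s.filter (fun y => w y = w x0)).card - 1 :=
        card_erase_of_mem hx0f
      have h1le : 1 ≤ (s.filter (fun y => w y = w x0)).card :=
        card_pos.mpr ⟨x0, hx0f⟩
      have := h (w x0)
      rw [Nat.even_iff] at this
      rw [Nat.odd_iff, hTcard]
      omega

end Aux

lemma negone_pow_eq (k : ℕ) : (-1 : ℤ) ^ k = 1 - 2 * ((k % 2 : ℕ) : ℤ) := by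
  rcases Nat.even_or_odd k with hk | hk
  · rw [hk.neg_one_pow, Nat.even_iff.mp hk]; simp
  · rw [hk.neg_one_pow, Nat.odd_iff.mp hk]; simp

/-- If `w : Fin (2a+2b) → Fin 2` takes the value `0` exactly `2a` times and
the value `1` exactly `2b` times, then the signed sum `Σ_χ (−1)^{cr(χ)}` over letter-preserving
perfect matchings `χ` for `w` is an odd integer; in particular it is nonzero. -/
theorem stmt11 (a b : ℕ) (w : Fin (2 * a + 2 * b) → Fin 2)
    (h0 : (Finset.univ.filter (fun r => w r = 0)).card = 2 * a)
    (h1 : (Finset.univ.filter (fun r => w r = 1)).card = 2 * b) :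
    Odd (∑ f ∈ lpMatchings (2 * a + 2 * b) w, (-1 : ℤ) ^ crossNum f) ∧
      (∑ f ∈ lpMatchings (2 * a + 2 * b) w, (-1 : ℤ) ^ crossNum f) ≠ 0 := by
  have heq : lpMatchings (2 * a + 2 * b) w = matchP w Finset.univ := by
    ext f
    simp [lpMatchings, matchP]
  have hcard : Odd (lpMatchings (2 * a + 2 * b) w).card := by
    rw [heq]
    apply odd_matchP
    intro c
    fin_cases c
    · show Even (Finset.univ.filter (fun x => w x = 0)).card; rw [h0]; exact even_two_mul a
    · show Even (Finset.univ.filter (fun x => w x = 1)).card; rw [h1]; exact even_two_mul b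
  have hsum : ∑ f ∈ lpMatchings (2 * a + 2 * b) w, (-1 : ℤ) ^ crossNum f
      = ((lpMatchings (2 * a + 2 * b) w).card : ℤ)
        - 2 * ∑ f ∈ lpMatchings (2 * a + 2 * b) w, ((crossNum f % 2 : ℕ) : ℤ) := by
    rw [Finset.sum_congr rfl (fun f _ => negone_pow_eq (crossNum f)),
      Finset.sum_sub_distrib, Finset.sum_const, Finset.mul_sum]
    simp
  have hodd : Odd (∑ f ∈ lpMatchings (2 * a + 2 * b) w, (-1 : ℤ) ^ crossNum f) := by
    rw [hsum]
    exact (Int.odd_coe_nat _ |>.mpr hcard).sub_even (even_two_mul _)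
  refine ⟨hodd, ?_⟩
  intro hzero
  rw [hzero] at hodd
  exact (Int.not_odd_iff_even.mpr Even.zero) hodd
end
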